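/- Let I ⊆ ℝ be an open interval, ε ∈ {−1, 1}, and λ, c ∈ ℝ. Let φ : I → ℝ be three times differentiable with φ(t) ≠ 0 for all t ∈ I, and let f : I → ℝ be twice differentiable. Assume that for all t ∈ I: (1) f''(t) = ελ + 3 φ''(t)/φ(t), and (2) φ(t) φ'(t) f'(t) = ελ φ(t)² − 2εc + φ(t) φ''(t) + 2 φ'(t)². Then for all t ∈ I the warping function φ satisfies the third-order ODE: −2 φ'(t)⁴ + 2cε (φ'(t)² + φ(t) φ''(t)) − φ(t) φ'(t)² φ''(t) − ελ φ(t)³ φ''(t) − (φ(t) φ''(t))² + φ(t)² φ'(t) φ'''(t) = 0. -/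

import Mathlib

/-- On an open interval `I ⊆ ℝ`, if `φ` (three times differentiable,
nowhere zero on `I`) and `f` (twice differentiable) satisfy the gradient Ricci soliton
equations of a warped product `I ×_φ N(c)`, namely
`f'' = ελ + 3 φ''/φ` and `φ φ' f' = ελ φ² − 2εc + φ φ'' + 2 φ'²`,
then `φ` satisfies the third-order ODE
`−2 φ'⁴ + 2cε(φ'² + φ φ'') − φ φ'² φ'' − ελ φ³ φ'' − (φ φ'')² + φ² φ' φ''' = 0` on `I`. -/
theorem stmt0 (I : Set ℝ) (hIopen : IsOpen I) (hIconn : I.OrdConnected)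
    (ε lam c : ℝ) (hε : ε = 1 ∨ ε = -1)
    (φ f : ℝ → ℝ)
    (hφ1 : ∀ t ∈ I, DifferentiableAt ℝ φ t)
    (hφ2 : ∀ t ∈ I, DifferentiableAt ℝ (deriv φ) t)
    (hφ3 : ∀ t ∈ I, DifferentiableAt ℝ (deriv (deriv φ)) t)
    (hφ0 : ∀ t ∈ I, φ t ≠ 0)
    (hf1 : ∀ t ∈ I, DifferentiableAt ℝ f t)
    (hf2 : ∀ t ∈ I, DifferentiableAt ℝ (deriv f) t)
    (heq1 : ∀ t ∈ I, deriv (deriv f) t = ε * lam + 3 * deriv (deriv φ) t / φ t)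
    (heq2 : ∀ t ∈ I, φ t * deriv φ t * deriv f t
      = ε * lam * (φ t) ^ 2 - 2 * ε * c + φ t * deriv (deriv φ) t + 2 * (deriv φ t) ^ 2) :
    ∀ t ∈ I,
      -2 * (deriv φ t) ^ 4
        + 2 * c * ε * ((deriv φ t) ^ 2 + φ t * deriv (deriv φ) t)
        - φ t * (deriv φ t) ^ 2 * deriv (deriv φ) t
        - ε * lam * (φ t) ^ 3 * deriv (deriv φ) t
        - (φ t * deriv (deriv φ) t) ^ 2
        + (φ t) ^ 2 * deriv φ t * deriv (deriv (deriv φ)) t = 0 := by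
  intro t ht
  have hmem : I ∈ nhds t := hIopen.mem_nhds ht
  have h1 : HasDerivAt φ (deriv φ t) t := (hφ1 t ht).hasDerivAt
  have h2 : HasDerivAt (deriv φ) (deriv (deriv φ) t) t := (hφ2 t ht).hasDerivAt
  have h3 : HasDerivAt (deriv (deriv φ)) (deriv (deriv (deriv φ)) t) t := (hφ3 t ht).hasDerivAt
  have hg1 : HasDerivAt f (deriv f t) t := (hf1 t ht).hasDerivAt
  have hg2 : HasDerivAt (deriv f) (deriv (deriv f) t) t := (hf2 t ht).hasDerivAt
  have hev : (fun s => φ s * deriv φ s * deriv f s)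
      =ᶠ[nhds t] (fun s => ε * lam * (φ s) ^ 2 - 2 * ε * c + φ s * deriv (deriv φ) s
        + 2 * (deriv φ s) ^ 2) :=
    Filter.eventuallyEq_of_mem hmem (fun s hs => heq2 s hs)
  have hL : HasDerivAt (fun s => φ s * deriv φ s * deriv f s)
      ((deriv φ t * deriv φ t + φ t * deriv (deriv φ) t) * deriv f t
        + φ t * deriv φ t * deriv (deriv f) t) t := (h1.mul h2).mul hg2
  have hR : HasDerivAt (fun s => ε * lam * (φ s) ^ 2 - 2 * ε * c + φ s * deriv (deriv φ) s
        + 2 * (deriv φ s) ^ 2)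
      ((ε * lam * (deriv φ t * φ t + φ t * deriv φ t)
        + (deriv φ t * deriv (deriv φ) t + φ t * deriv (deriv (deriv φ)) t))
        + 2 * (deriv (deriv φ) t * deriv φ t + deriv φ t * deriv (deriv φ) t)) t := by
    simpa [pow_two, Pi.add_def, Pi.mul_def] using ((((h1.mul h1).const_mul (ε * lam)).sub_const (2 * ε * c)).add (h1.mul h3)).add
      ((h2.mul h2).const_mul 2)
  have key : (deriv φ t * deriv φ t + φ t * deriv (deriv φ) t) * deriv f t
        + φ t * deriv φ t * deriv (deriv f) t
      = (ε * lam * (deriv φ t * φ t + φ t * deriv φ t)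
        + (deriv φ t * deriv (deriv φ) t + φ t * deriv (deriv (deriv φ)) t))
        + 2 * (deriv (deriv φ) t * deriv φ t + deriv φ t * deriv (deriv φ) t) := by
    rw [← hL.deriv, ← hR.deriv]
    exact hev.deriv_eq
  have e1 := heq1 t ht
  have e2 := heq2 t ht
  have hφt := hφ0 t ht
  have e1' : deriv (deriv f) t * φ t = ε * lam * φ t + 3 * deriv (deriv φ) t := by
    field_simp at e1
    linarith [e1]
  linear_combination ((deriv φ t) ^ 2 + φ t * deriv (deriv φ) t) * e2
    + φ t * (deriv φ t) ^ 2 * e1' - φ t * deriv φ t * key
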